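/- A closed densely defined operator X from H0 to H1 is a weak solution of the Riccati equation A1 X - X A0 - X V X + V* = 0 if and only if it is a strong solution, i.e., if and only if A0 x + V X x lies in Dom(X) for every x in Dom(X) and A1 X x - X(A0 x + V X x) + V* x = 0 for every x in Dom(X). -/

import Mathlib

open scoped ComplexInnerProductSpace

/-- Graph characterization: for a closed densely defined operator `X`, a pair `(u, v)` lies in
the graph of `X` iff `⟪X† y, u⟫ = ⟪y, v⟫` for all `y` in the domain of the adjoint. -/
lemma mem_graph_of_forall_adjoint
    {H0 H1 : Type*}
    [NormedAddCommGroup H0] [InnerProductSpace ℂ H0] [CompleteSpace H0]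
    [NormedAddCommGroup H1] [InnerProductSpace ℂ H1] [CompleteSpace H1]
    (X : H0 →ₗ.[ℂ] H1)
    (hdense : Dense (X.domain : Set H0))
    (hclosed : IsClosed (X.graph : Set (H0 × H1)))
    (u : H0) (v : H1)
    (h : ∀ y : X.adjoint.domain, ⟪X.adjoint y, u⟫ = ⟪(y : H1), v⟫) :
    (u, v) ∈ X.graph := by
  set e := WithLp.prodContinuousLinearEquiv 2 ℂ H0 H1 with he
  set K : Submodule ℂ (WithLp 2 (H0 × H1)) :=
    X.graph.comap (e : WithLp 2 (H0 × H1) →ₗ[ℂ] H0 × H1) with hK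
  have hKclosed : IsClosed (K : Set (WithLp 2 (H0 × H1))) :=
    hclosed.preimage e.continuous
  haveI : CompleteSpace K := hKclosed.completeSpace_coe
  have hKK : Kᗮᗮ = K := Submodule.orthogonal_orthogonal K
  have hp : e.symm (u, v) ∈ Kᗮᗮ := by
    rw [Submodule.mem_orthogonal]
    intro q hq
    rw [Submodule.mem_orthogonal] at hq
    -- components of q
    set a : H0 := (e q).1 with ha
    set b : H1 := (e q).2 with hb
    have hq' : ∀ x : X.domain, ⟪(x : H0), a⟫ + ⟪X x, b⟫ = 0 := by
      intro x
      have hmem : e.symm ((x : H0), X x) ∈ K := by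
        simp only [hK, Submodule.mem_comap]
        have : (e : WithLp 2 (H0 × H1) →ₗ[ℂ] H0 × H1) (e.symm ((x : H0), X x))
            = ((x : H0), X x) := e.apply_symm_apply _
        rw [this]
        exact X.mem_graph x
      have := hq _ hmem
      rw [WithLp.prod_inner_apply] at this
      have h1 : (e.symm ((x : H0), X x) : WithLp 2 (H0 × H1)).ofLp.1 = (x : H0) := rfl
      have h2 : (e.symm ((x : H0), X x) : WithLp 2 (H0 × H1)).ofLp.2 = X x := rfl
      rwa [h1, h2] at this
    have hbmem : -b ∈ X.adjoint.domain := by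
      apply LinearPMap.mem_adjoint_domain_of_exists
      refine ⟨a, fun x => ?_⟩
      have := hq' x
      have h1 : ⟪(x : H0), a⟫ = -⟪X x, b⟫ := by linear_combination this
      calc ⟪a, (x : H0)⟫ = (starRingEnd ℂ) ⟪(x : H0), a⟫ := (inner_conj_symm _ _).symm
        _ = (starRingEnd ℂ) (-⟪X x, b⟫) := by rw [h1]
        _ = -⟪b, X x⟫ := by rw [map_neg, inner_conj_symm]
        _ = ⟪-b, X x⟫ := (inner_neg_left _ _).symm
    have hXb : X.adjoint ⟨-b, hbmem⟩ = a := by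
      apply LinearPMap.adjoint_apply_eq hdense
      intro x
      have := hq' x
      have h1 : ⟪(x : H0), a⟫ = -⟪X x, b⟫ := by linear_combination this
      calc ⟪a, (x : H0)⟫ = (starRingEnd ℂ) ⟪(x : H0), a⟫ := (inner_conj_symm _ _).symm
        _ = (starRingEnd ℂ) (-⟪X x, b⟫) := by rw [h1]
        _ = -⟪b, X x⟫ := by rw [map_neg, inner_conj_symm]
        _ = ⟪-b, X x⟫ := (inner_neg_left _ _).symm
    have hmain := h ⟨-b, hbmem⟩
    rw [hXb] at hmain
    have hcoe : ((⟨-b, hbmem⟩ : X.adjoint.domain) : H1) = -b := rfl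
    rw [hcoe, inner_neg_left] at hmain
    rw [WithLp.prod_inner_apply]
    show (⟪a, u⟫ : ℂ) + ⟪b, v⟫ = 0
    linear_combination hmain
  rw [hKK, hK, Submodule.mem_comap] at hp
  have : (e : WithLp 2 (H0 × H1) →ₗ[ℂ] H0 × H1) (e.symm (u, v)) = (u, v) :=
    e.apply_symm_apply _
  rwa [this] at hp

/-- A closed densely defined operator `X` from `H₀` to `H₁` is a weak solution
of the Riccati equation `A₁ X - X A₀ - X V X + V* = 0` iff it is a strong solution, i.e., iff
`A₀ x + V (X x) ∈ Dom X` for every `x ∈ Dom X` and `A₁ (X x) - X (A₀ x + V (X x)) + V* x = 0`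
for every `x ∈ Dom X`. -/
theorem weak_iff_strong_solution_riccati
    {H0 H1 : Type*}
    [NormedAddCommGroup H0] [InnerProductSpace ℂ H0] [CompleteSpace H0] [TopologicalSpace.SeparableSpace H0]
    [NormedAddCommGroup H1] [InnerProductSpace ℂ H1] [CompleteSpace H1] [TopologicalSpace.SeparableSpace H1]
    (A0 : H0 →L[ℂ] H0) (A1 : H1 →L[ℂ] H1) (V : H1 →L[ℂ] H0)
    (hA0 : IsSelfAdjoint A0) (hA1 : IsSelfAdjoint A1)
    (X : H0 →ₗ.[ℂ] H1)
    (hdense : Dense (X.domain : Set H0))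
    (hclosed : IsClosed (X.graph : Set (H0 × H1))) :
    -- weak solution
    (∀ (x : X.domain) (y : X.adjoint.domain),
        ⟪A1 (y : H1), X x⟫ - ⟪X.adjoint y, A0 (x : H0)⟫ - ⟪X.adjoint y, V (X x)⟫
          + ⟪V (y : H1), (x : H0)⟫ = 0) ↔
    -- strong solution
    ((∀ x : X.domain, A0 (x : H0) + V (X x) ∈ X.domain) ∧
      ∀ (x : X.domain) (hx : A0 (x : H0) + V (X x) ∈ X.domain),
        A1 (X x) - X ⟨A0 (x : H0) + V (X x), hx⟩ + ContinuousLinearMap.adjoint V (x : H0) = 0) := by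
  -- rewrite the weak condition
  have key : ∀ (x : X.domain) (y : X.adjoint.domain),
      (⟪A1 (y : H1), X x⟫ - ⟪X.adjoint y, A0 (x : H0)⟫ - ⟪X.adjoint y, V (X x)⟫
          + ⟪V (y : H1), (x : H0)⟫ = 0) ↔
      (⟪X.adjoint y, A0 (x : H0) + V (X x)⟫
          = ⟪(y : H1), A1 (X x) + ContinuousLinearMap.adjoint V (x : H0)⟫) := by
    intro x y
    have h1 : ⟪A1 (y : H1), X x⟫ = ⟪(y : H1), A1 (X x)⟫ := by
      conv_lhs => rw [← hA1.adjoint_eq]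
      exact ContinuousLinearMap.adjoint_inner_left _ _ _
    have h2 : ⟪V (y : H1), (x : H0)⟫ = ⟪(y : H1), ContinuousLinearMap.adjoint V (x : H0)⟫ :=
      (ContinuousLinearMap.adjoint_inner_right _ _ _).symm
    rw [h1, h2, inner_add_right, inner_add_right]
    constructor <;> intro hh <;> linear_combination -hh
  constructor
  · intro hweak
    have hgraph : ∀ x : X.domain,
        (A0 (x : H0) + V (X x), A1 (X x) + ContinuousLinearMap.adjoint V (x : H0)) ∈ X.graph := by
      intro x
      apply mem_graph_of_forall_adjoint X hdense hclosed
      intro y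
      exact (key x y).mp (hweak x y)
    have hdom : ∀ x : X.domain, A0 (x : H0) + V (X x) ∈ X.domain := by
      intro x
      rcases X.mem_graph_iff.mp (hgraph x) with ⟨z, hz1, hz2⟩
      have hz1' : (z : H0) = A0 (x : H0) + V (X x) := hz1
      rw [← hz1']; exact z.2
    refine ⟨hdom, fun x hx => ?_⟩
    rcases X.mem_graph_iff.mp (hgraph x) with ⟨z, hz1, hz2⟩
    have hz1' : (z : H0) = A0 (x : H0) + V (X x) := hz1
    have hz2' : X z = A1 (X x) + ContinuousLinearMap.adjoint V (x : H0) := hz2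
    have hz : z = ⟨A0 (x : H0) + V (X x), hx⟩ := Subtype.ext hz1'
    rw [hz] at hz2'
    rw [hz2']
    abel
  · rintro ⟨hdom, heq⟩ x y
    rw [key x y]
    have hx := hdom x
    have hXu : X ⟨A0 (x : H0) + V (X x), hx⟩
        = A1 (X x) + ContinuousLinearMap.adjoint V (x : H0) := by
      have h0 := heq x hx
      have h1 : A1 (X x) + ContinuousLinearMap.adjoint V (x : H0)
          - X ⟨A0 (x : H0) + V (X x), hx⟩ = 0 := by rw [← h0]; abel
      exact (sub_eq_zero.mp h1).symm
    have := LinearPMap.adjoint_isFormalAdjoint hdense y ⟨A0 (x : H0) + V (X x), hx⟩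
    rw [hXu] at this
    exact this
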